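/- For every n ≥ 0, the number of permutations of {1,…,n} with no ascending subsequence of length 3 equals the n-th Catalan number, that is, #S_n^{(2)} = (1/(n+1))·C(2n, n). -/

import Mathlib

noncomputable section

/-- `f` has an ascending subsequence of length `k`. -/
def HasAscSeq {n : ℕ} (f : Fin n → Fin n) (k : ℕ) : Prop :=
  ∃ s : Fin k → Fin n, StrictMono s ∧ StrictMono fun a => f (s a)

/-- The number of permutations of `{1,…,n}` with no ascending subsequence of
length `m+1`, i.e. the cardinality of `S_n^{(m)}`. -/
def permCount (m n : ℕ) : ℕ :=
  Nat.card {τ : Equiv.Perm (Fin n) // ¬ HasAscSeq (⇑τ) (m + 1)}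

open List DyckStep Finset

section lists
variable {ι α : Type*}

lemma take_two_bind (l : List ι) (f g : ι → α) (t : ℕ) :
    ((l.flatMap fun k => [f k, g k]).take (2*t)) = (l.take t).flatMap fun k => [f k, g k] := by
  induction l generalizing t with
  | nil => simp
  | cons a l ih =>
    cases t with
    | zero => simp
    | succ t =>
      rw [Nat.mul_succ, show 2*t+2 = (2*t+1)+1 by ring]
      simp [List.take_succ_cons, List.flatMap_cons]
      exact ih t

lemma take_two_bind_odd (l : List ι) (f g : ι → α) (t : ℕ) (h : t < l.length) :
    ((l.flatMap fun k => [f k, g k]).take (2*t+1)) =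
      ((l.take t).flatMap fun k => [f k, g k]) ++ [f l[t]] := by
  induction l generalizing t with
  | nil => simp at h
  | cons a l ih =>
    cases t with
    | zero => simp
    | succ t =>
      rw [Nat.mul_succ, show 2*t+2+1 = (2*t+1)+1+1 by ring]
      simp [List.take_succ_cons, List.flatMap_cons]
      exact ih t (by simpa using h)

lemma count_two_bind [BEq α] (l : List ι) (f g : ι → α) (x : α) :
    ((l.flatMap fun k => [f k, g k]).count x) = (l.map f).count x + (l.map g).count x := by
  induction l with
  | nil => simp
  | cons a l ih =>
    simp [List.flatMap_cons, List.count_cons, ih]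
    ring

lemma getElem?_two_bind (l : List ι) (f g : ι → α) (t : ℕ) (h : t < l.length) :
    (l.flatMap fun k => [f k, g k])[2*t]? = some (f l[t]) := by
  induction l generalizing t with
  | nil => simp at h
  | cons a l ih =>
    cases t with
    | zero => simp [List.flatMap_cons]
    | succ t =>
      rw [Nat.mul_succ, show 2*t+2 = (2*t)+1+1 by ring]
      simp only [List.flatMap_cons, List.cons_append, List.nil_append,
        List.getElem?_cons_succ, List.getElem_cons_succ]
      exact ih t (by simpa using h)

lemma getElem?_two_bind_odd (l : List ι) (f g : ι → α) (t : ℕ) (h : t < l.length) :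
    (l.flatMap fun k => [f k, g k])[2*t+1]? = some (g l[t]) := by
  induction l generalizing t with
  | nil => simp at h
  | cons a l ih =>
    cases t with
    | zero => simp [List.flatMap_cons]
    | succ t =>
      rw [Nat.mul_succ, show 2*t+2+1 = (2*t+1)+1+1 by ring]
      simp only [List.flatMap_cons, List.cons_append, List.nil_append,
        List.getElem?_cons_succ, List.getElem_cons_succ]
      exact ih t (by simpa using h)

lemma length_two_bind (l : List ι) (f g : ι → α) :
    (l.flatMap fun k => [f k, g k]).length = 2 * l.length := by
  induction l with
  | nil => simp
  | cons a l ih => simp [List.flatMap_cons, ih]; ring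

end lists

-- countP over List.range vs Finset card
lemma countP_range_eq (t : ℕ) (p : ℕ → Prop) [DecidablePred p] :
    (List.range t).countP (fun k => decide (p k)) = ((Finset.range t).filter p).card := by
  simp [List.countP_eq_length_filter, Finset.filter, Finset.range, Multiset.range]

section word
variable {n : ℕ} {A B : Finset ℕ}

/-- The letter word of a pair of subsets. -/
def wordList (n : ℕ) (A B : Finset ℕ) : List DyckStep :=
  (List.range n).flatMap fun k => [if k ∈ A then D else U, if k ∈ B then U else D]

lemma wordList_length : (wordList n A B).length = 2 * n := by
  rw [wordList, length_two_bind, List.length_range]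

lemma range_filter_mem (t : ℕ) : ((Finset.range t).filter (· ∈ A)).card
    = (A.filter (· < t)).card := by
  congr 1; ext k; simp [and_comm]

lemma range_filter_not_mem (t : ℕ) : ((Finset.range t).filter (¬ · ∈ A)).card
    = t - (A.filter (· < t)).card := by
  have h1 := Finset.card_filter_add_card_filter_not (s := Finset.range t)
    (p := (· ∈ A))
  rw [Finset.card_range] at h1
  have h2 := range_filter_mem (A := A) t
  omega

lemma count_map_ite_D (t : ℕ) :
    ((List.range t).map fun k => if k ∈ A then D else U).count D
      = (A.filter (· < t)).card := by
  rw [List.count_eq_countP, List.countP_map]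
  have : ((fun x => x == D) ∘ fun k => if k ∈ A then D else U) = fun k => decide (k ∈ A) := by
    funext k; by_cases h : k ∈ A <;> simp [h]
  rw [this, countP_range_eq, range_filter_mem]

lemma count_map_ite_U (t : ℕ) :
    ((List.range t).map fun k => if k ∈ A then D else U).count U
      = t - (A.filter (· < t)).card := by
  rw [List.count_eq_countP, List.countP_map]
  have : ((fun x => x == U) ∘ fun k => if k ∈ A then D else U) = fun k => decide (¬ k ∈ A) := by
    funext k; by_cases h : k ∈ A <;> simp [h]
  rw [this, countP_range_eq, range_filter_not_mem]

lemma count_map_ite_U' (t : ℕ) :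
    ((List.range t).map fun k => if k ∈ B then U else D).count U
      = (B.filter (· < t)).card := by
  rw [List.count_eq_countP, List.countP_map]
  have : ((fun x => x == U) ∘ fun k => if k ∈ B then U else D) = fun k => decide (k ∈ B) := by
    funext k; by_cases h : k ∈ B <;> simp [h]
  rw [this, countP_range_eq, range_filter_mem]

lemma count_map_ite_D' (t : ℕ) :
    ((List.range t).map fun k => if k ∈ B then U else D).count D
      = t - (B.filter (· < t)).card := by
  rw [List.count_eq_countP, List.countP_map]
  have : ((fun x => x == D) ∘ fun k => if k ∈ B then U else D) = fun k => decide (¬ k ∈ B) := by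
    funext k; by_cases h : k ∈ B <;> simp [h]
  rw [this, countP_range_eq, range_filter_not_mem]

lemma wordList_take_even (t : ℕ) (ht : t ≤ n) :
    (wordList n A B).take (2*t) = wordList t A B := by
  rw [wordList, take_two_bind, List.take_range, min_eq_left ht, wordList]

lemma wordList_take_odd (t : ℕ) (ht : t < n) :
    (wordList n A B).take (2*t+1) = wordList t A B ++ [if t ∈ A then D else U] := by
  rw [wordList, take_two_bind_odd _ _ _ _ (by simpa using ht), List.take_range,
    min_eq_left ht.le, wordList, List.getElem_range]

lemma wordList_count_D (t : ℕ) :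
    (wordList t A B).count D = (A.filter (· < t)).card + (t - (B.filter (· < t)).card) := by
  rw [wordList, count_two_bind, count_map_ite_D, count_map_ite_D']

lemma wordList_count_U (t : ℕ) :
    (wordList t A B).count U = (t - (A.filter (· < t)).card) + (B.filter (· < t)).card := by
  rw [wordList, count_two_bind, count_map_ite_U, count_map_ite_U']

end word

section dompair
variable {n : ℕ} {A B : Finset ℕ}

def IsDomPair (n : ℕ) (A B : Finset ℕ) : Prop :=
  A ⊆ Finset.range n ∧ B ⊆ Finset.range n ∧ A.card = B.card ∧
    ∀ q ∈ A, (A.filter (· ≤ q)).card ≤ (B.filter (· < q)).card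

lemma filter_lt_card_le (t : ℕ) : (A.filter (· < t)).card ≤ t := by
  calc (A.filter (· < t)).card ≤ (Finset.range t).card := by
        apply Finset.card_le_card
        intro x hx
        simp only [Finset.mem_filter] at hx
        simpa using hx.2
    _ = t := Finset.card_range t

lemma filter_le_card_succ {q : ℕ} (hq : q ∈ A) :
    (A.filter (· ≤ q)).card = (A.filter (· < q)).card + 1 := by
  have : A.filter (· ≤ q) = insert q (A.filter (· < q)) := by
    ext x
    simp only [Finset.mem_filter, Finset.mem_insert]
    constructor
    · rintro ⟨hx, hle⟩
      rcases lt_or_eq_of_le hle with h | h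
      · exact Or.inr ⟨hx, h⟩
      · exact Or.inl h
    · rintro (rfl | ⟨hx, hlt⟩)
      · exact ⟨hq, le_refl _⟩
      · exact ⟨hx, hlt.le⟩
  rw [this, Finset.card_insert_of_notMem (by simp)]

lemma dom_all (hdom : ∀ q ∈ A, (A.filter (· ≤ q)).card ≤ (B.filter (· < q)).card) (t : ℕ) :
    (A.filter (· < t)).card ≤ (B.filter (· < t)).card := by
  rcases (A.filter (· < t)).eq_empty_or_nonempty with h | h
  · simp [h]
  · set q := (A.filter (· < t)).max' h with hq
    have hqmem := (A.filter (· < t)).max'_mem h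
    simp only [Finset.mem_filter] at hqmem
    calc (A.filter (· < t)).card ≤ (A.filter (· ≤ q)).card := by
          apply Finset.card_le_card
          intro x hx
          simp only [Finset.mem_filter] at hx ⊢
          exact ⟨hx.1, Finset.le_max' _ _ (by simp only [Finset.mem_filter]; exact hx)⟩
      _ ≤ (B.filter (· < q)).card := hdom q hqmem.1
      _ ≤ (B.filter (· < t)).card := by
          apply Finset.card_le_card
          intro x hx
          simp only [Finset.mem_filter] at hx ⊢
          exact ⟨hx.1, hx.2.trans hqmem.2⟩

lemma filter_all_of_subset (h : A ⊆ Finset.range n) : A.filter (· < n) = A :=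
  Finset.filter_true_of_mem (fun x hx => Finset.mem_range.mp (h hx))

def dyckWordOf (n : ℕ) (A B : Finset ℕ) (h : IsDomPair n A B) : DyckWord where
  toList := wordList n A B
  count_U_eq_count_D := by
    obtain ⟨hA, hB, hcard, hdom⟩ := h
    rw [wordList_count_U, wordList_count_D, filter_all_of_subset hA, filter_all_of_subset hB,
      hcard]
    have := (Finset.card_le_card hB).trans_eq (Finset.card_range n)
    omega
  count_D_le_count_U i := by
    obtain ⟨hA, hB, hcard, hdom⟩ := h
    rcases le_or_gt (2*n) i with hi | hi
    · rw [List.take_of_length_le (by rw [wordList_length]; exact hi)]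
      rw [wordList_count_U, wordList_count_D, filter_all_of_subset hA, filter_all_of_subset hB,
        hcard]
      have := (Finset.card_le_card hB).trans_eq (Finset.card_range n)
      omega
    · rcases Nat.even_or_odd' i with ⟨t, rfl | rfl⟩
      · have ht : t ≤ n := by omega
        rw [wordList_take_even t ht, wordList_count_U, wordList_count_D]
        have h1 := dom_all hdom t
        have h2 := filter_lt_card_le (A := A) t
        have h3 := filter_lt_card_le (A := B) t
        omega
      · have ht : t < n := by omega
        rw [wordList_take_odd t ht, List.count_append, List.count_append,
          wordList_count_U, wordList_count_D]
        have h2 := filter_lt_card_le (A := A) t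
        have h3 := filter_lt_card_le (A := B) t
        by_cases htA : t ∈ A
        · have h4 := hdom t htA
          rw [filter_le_card_succ htA] at h4
          simp [htA]
          omega
        · have h1 := dom_all hdom t
          simp [htA]
          omega

lemma semilength_dyckWordOf (h : IsDomPair n A B) : (dyckWordOf n A B h).semilength = n := by
  obtain ⟨hA, hB, hcard, hdom⟩ := h
  show (wordList n A B).count U = n
  rw [wordList_count_U, filter_all_of_subset hA, filter_all_of_subset hB, ← hcard]
  have := (Finset.card_le_card hA).trans_eq (Finset.card_range n)
  omega

end dompair

section extract
variable {n : ℕ}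

def extractA (n : ℕ) (l : List DyckStep) : Finset ℕ :=
  (Finset.range n).filter fun k => l[2*k]? = some D

def extractB (n : ℕ) (l : List DyckStep) : Finset ℕ :=
  (Finset.range n).filter fun k => l[2*k+1]? = some U

lemma wordList_getElem?_even {A B : Finset ℕ} {t : ℕ} (ht : t < n) :
    (wordList n A B)[2*t]? = some (if t ∈ A then D else U) := by
  rw [wordList, getElem?_two_bind _ _ _ t (by simpa using ht), List.getElem_range]

lemma wordList_getElem?_odd {A B : Finset ℕ} {t : ℕ} (ht : t < n) :
    (wordList n A B)[2*t+1]? = some (if t ∈ B then U else D) := by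
  rw [wordList, getElem?_two_bind_odd _ _ _ t (by simpa using ht), List.getElem_range]

lemma extractA_wordList {A B : Finset ℕ} (hA : A ⊆ Finset.range n) :
    extractA n (wordList n A B) = A := by
  ext k
  simp only [extractA, Finset.mem_filter, Finset.mem_range]
  constructor
  · rintro ⟨hk, he⟩
    rw [wordList_getElem?_even hk] at he
    by_cases h : k ∈ A
    · exact h
    · simp [h] at he
  · intro hk
    refine ⟨Finset.mem_range.mp (hA hk), ?_⟩
    rw [wordList_getElem?_even (Finset.mem_range.mp (hA hk))]
    simp [hk]

lemma extractB_wordList {A B : Finset ℕ} (hB : B ⊆ Finset.range n) :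
    extractB n (wordList n A B) = B := by
  ext k
  simp only [extractB, Finset.mem_filter, Finset.mem_range]
  constructor
  · rintro ⟨hk, he⟩
    rw [wordList_getElem?_odd hk] at he
    by_cases h : k ∈ B
    · exact h
    · simp [h] at he
  · intro hk
    refine ⟨Finset.mem_range.mp (hB hk), ?_⟩
    rw [wordList_getElem?_odd (Finset.mem_range.mp (hB hk))]
    simp [hk]

lemma toList_eq_wordList (p : DyckWord) (hp : p.semilength = n) :
    p.toList = wordList n (extractA n p.toList) (extractB n p.toList) := by
  have hlen : p.toList.length = 2 * n := by rw [← p.two_mul_semilength_eq_length, hp]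
  apply List.ext_getElem?
  intro i
  rcases le_or_gt (2*n) i with hi | hi
  · rw [List.getElem?_eq_none (by omega : p.toList.length ≤ i),
      List.getElem?_eq_none (by rw [wordList_length]; omega)]
  · rcases Nat.even_or_odd' i with ⟨t, rfl | rfl⟩
    · have ht : t < n := by omega
      rw [wordList_getElem?_even ht, List.getElem?_eq_getElem (by omega)]
      simp only [extractA, Finset.mem_filter, Finset.mem_range,
        List.getElem?_eq_getElem (show 2*t < p.toList.length by omega)]
      rcases (p.toList[2*t]).dichotomy with h | h <;> rw [h] <;> simp [ht, h]
    · have ht : t < n := by omega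
      rw [wordList_getElem?_odd ht, List.getElem?_eq_getElem (by omega)]
      simp only [extractB, Finset.mem_filter, Finset.mem_range,
        List.getElem?_eq_getElem (show 2*t+1 < p.toList.length by omega)]
      rcases (p.toList[2*t+1]).dichotomy with h | h <;> rw [h] <;> simp [ht, h]

lemma isDomPair_extract (p : DyckWord) (hp : p.semilength = n) :
    IsDomPair n (extractA n p.toList) (extractB n p.toList) := by
  set A := extractA n p.toList with hA
  set B := extractB n p.toList with hB
  have hAr : A ⊆ Finset.range n := Finset.filter_subset _ _
  have hBr : B ⊆ Finset.range n := Finset.filter_subset _ _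
  have hw := toList_eq_wordList p hp
  rw [← hA, ← hB] at hw
  refine ⟨hAr, hBr, ?_, ?_⟩
  · have := p.count_U_eq_count_D
    rw [hw, wordList_count_U, wordList_count_D, filter_all_of_subset hAr,
      filter_all_of_subset hBr] at this
    have h1 := (Finset.card_le_card hAr).trans_eq (Finset.card_range n)
    have h2 := (Finset.card_le_card hBr).trans_eq (Finset.card_range n)
    omega
  · intro q hq
    have hqn : q < n := Finset.mem_range.mp (hAr hq)
    have := p.count_D_le_count_U (2*q+1)
    rw [hw, wordList_take_odd q hqn, List.count_append, List.count_append,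
      wordList_count_U, wordList_count_D] at this
    simp only [hq, if_true] at this
    have h2 := filter_lt_card_le (A := A) q
    have h3 := filter_lt_card_le (A := B) q
    rw [filter_le_card_succ hq]
    simp at this
    omega

/-- The type of dominated pairs. -/
def DomPairs (n : ℕ) : Type :=
  {AB : Finset ℕ × Finset ℕ // IsDomPair n AB.1 AB.2}

def domPairsEquivDyck (n : ℕ) : DomPairs n ≃ {p : DyckWord // p.semilength = n} where
  toFun x := ⟨dyckWordOf n x.1.1 x.1.2 x.2, semilength_dyckWordOf x.2⟩
  invFun p := ⟨(extractA n p.1.toList, extractB n p.1.toList), isDomPair_extract p.1 p.2⟩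
  left_inv x := by
    obtain ⟨⟨A, B⟩, h⟩ := x
    have h1 : (dyckWordOf n A B h).toList = wordList n A B := rfl
    apply Subtype.ext
    dsimp only
    rw [h1, extractA_wordList h.1, extractB_wordList h.2.1]
  right_inv p := by
    apply Subtype.ext
    apply DyckWord.ext
    exact (toList_eq_wordList p.1 p.2).symm

end extract

section perm
variable {n : ℕ}

def IsMinAt (σ : Equiv.Perm (Fin n)) (i : Fin n) : Prop := ∀ j, j < i → σ i < σ j

instance (σ : Equiv.Perm (Fin n)) : DecidablePred (IsMinAt σ) := fun i =>
  inferInstanceAs (Decidable (∀ j, j < i → σ i < σ j))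

def minPos (σ : Equiv.Perm (Fin n)) : Finset (Fin n) := Finset.univ.filter (IsMinAt σ)

def minVal (σ : Equiv.Perm (Fin n)) : Finset (Fin n) := (minPos σ).image σ

lemma strictMono3 {α : Type*} [Preorder α] {x y z : α} (h1 : x < y) (h2 : y < z) :
    StrictMono ![x, y, z] := by
  intro i j hij
  fin_cases i <;> fin_cases j <;>
    first
      | exact absurd hij (by decide)
      | exact h1
      | exact h2
      | exact h1.trans h2

lemma hasAsc_of (σ : Equiv.Perm (Fin n)) {a b c : Fin n} (hab : a < b) (hbc : b < c)
    (h1 : σ a < σ b) (h2 : σ b < σ c) : HasAscSeq (⇑σ) 3 := by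
  refine ⟨![a, b, c], strictMono3 hab hbc, ?_⟩
  have he : (fun i => σ (![a, b, c] i)) = ![σ a, σ b, σ c] := by
    funext i; fin_cases i <;> rfl
  rw [he]
  exact strictMono3 h1 h2

lemma not_min_elim {σ : Equiv.Perm (Fin n)} {i : Fin n} (h : ¬ IsMinAt σ i) :
    ∃ j, j < i ∧ σ j < σ i := by
  unfold IsMinAt at h
  push_neg at h
  obtain ⟨j, hj1, hj2⟩ := h
  refine ⟨j, hj1, lt_of_le_of_ne hj2 ?_⟩
  intro heq
  exact absurd (σ.injective heq) (ne_of_lt hj1)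

lemma avoid_nonmin {σ : Equiv.Perm (Fin n)} (hav : ¬ HasAscSeq (⇑σ) 3) {i j : Fin n}
    (hij : i < j) (hi : ¬ IsMinAt σ i) : σ j < σ i := by
  obtain ⟨j', hj1, hj2⟩ := not_min_elim hi
  by_contra h
  have hne : σ i ≠ σ j := fun heq => absurd (σ.injective heq) (ne_of_lt hij)
  have : σ i < σ j := lt_of_le_of_ne (not_lt.mp h) hne
  exact hav (hasAsc_of σ hj1 hij hj2 this)

lemma avoid_of_two_classes (σ : Equiv.Perm (Fin n)) (S : Finset (Fin n))
    (h1 : ∀ i ∈ S, ∀ j ∈ S, i < j → σ j < σ i)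
    (h2 : ∀ i ∉ S, ∀ j ∉ S, i < j → σ j < σ i) : ¬ HasAscSeq (⇑σ) 3 := by
  rintro ⟨s, hs, hσs⟩
  have h01 : s 0 < s 1 := hs (show (0 : Fin 3) < 1 by decide)
  have h12 : s 1 < s 2 := hs (show (1 : Fin 3) < 2 by decide)
  have g01 : σ (s 0) < σ (s 1) := hσs (show (0 : Fin 3) < 1 by decide)
  have g12 : σ (s 1) < σ (s 2) := hσs (show (1 : Fin 3) < 2 by decide)
  by_cases c0 : s 0 ∈ S <;> by_cases c1 : s 1 ∈ S <;> by_cases c2 : s 2 ∈ S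
  · exact absurd g01 (not_lt.mpr (h1 _ c0 _ c1 h01).le)
  · exact absurd g01 (not_lt.mpr (h1 _ c0 _ c1 h01).le)
  · exact absurd (g01.trans g12) (not_lt.mpr (h1 _ c0 _ c2 (h01.trans h12)).le)
  · exact absurd g12 (not_lt.mpr (h2 _ c1 _ c2 h12).le)
  · exact absurd g12 (not_lt.mpr (h1 _ c1 _ c2 h12).le)
  · exact absurd (g01.trans g12) (not_lt.mpr (h2 _ c0 _ c2 (h01.trans h12)).le)
  · exact absurd g01 (not_lt.mpr (h2 _ c0 _ c1 h01).le)
  · exact absurd g01 (not_lt.mpr (h2 _ c0 _ c1 h01).le)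

section rank

variable (S T : Finset (Fin n)) (f : Fin n → Fin n)

lemma image_eq_of_anti (hcard : S.card = T.card) (hmem : ∀ x ∈ S, f x ∈ T)
    (hanti : ∀ x ∈ S, ∀ y ∈ S, x < y → f y < f x) : S.image f = T := by
  have hinj : Set.InjOn f S := by
    intro x hx y hy hxy
    rcases lt_trichotomy x y with h | h | h
    · exact absurd hxy (ne_of_gt (hanti x hx y hy h))
    · exact h
    · exact absurd hxy (ne_of_lt (hanti y hy x hx h))
  apply Finset.eq_of_subset_of_card_le
  · intro y hy
    obtain ⟨x, hx, rfl⟩ := Finset.mem_image.mp hy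
    exact hmem x hx
  · rw [Finset.card_image_of_injOn hinj, hcard]

lemma rank_transport (hcard : S.card = T.card) (hmem : ∀ x ∈ S, f x ∈ T)
    (hanti : ∀ x ∈ S, ∀ y ∈ S, x < y → f y < f x) {x : Fin n} (hx : x ∈ S) :
    (T.filter (f x ≤ ·)).card = (S.filter (· ≤ x)).card := by
  symm
  apply Finset.card_bij (fun a _ => f a)
  · intro a ha
    simp only [Finset.mem_filter] at ha ⊢
    refine ⟨hmem a ha.1, ?_⟩
    rcases eq_or_lt_of_le ha.2 with h | h
    · exact le_of_eq (by rw [h])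
    · exact (hanti a ha.1 x hx h).le
  · intro a ha b hb hab
    simp only [Finset.mem_filter] at ha hb
    by_contra hne
    rcases lt_or_gt_of_ne hne with h | h
    · exact absurd hab (ne_of_gt (hanti a ha.1 b hb.1 h))
    · exact absurd hab (ne_of_lt (hanti b hb.1 a ha.1 h))
  · intro b hb
    simp only [Finset.mem_filter] at hb
    have : b ∈ S.image f := (image_eq_of_anti S T f hcard hmem hanti).symm ▸ hb.1
    obtain ⟨a, ha, rfl⟩ := Finset.mem_image.mp this
    refine ⟨a, Finset.mem_filter.mpr ⟨ha, ?_⟩, rfl⟩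
    by_contra hax
    have hlt : x < a := lt_of_not_ge hax
    exact absurd hb.2 (not_le.mpr (hanti x hx a ha hlt))

lemma rank_transport' (hcard : S.card = T.card) (hmem : ∀ x ∈ S, f x ∈ T)
    (hanti : ∀ x ∈ S, ∀ y ∈ S, x < y → f y < f x) {x : Fin n} (hx : x ∈ S) :
    (T.filter (· ≤ f x)).card = (S.filter (x ≤ ·)).card := by
  symm
  apply Finset.card_bij (fun a _ => f a)
  · intro a ha
    simp only [Finset.mem_filter] at ha ⊢
    refine ⟨hmem a ha.1, ?_⟩
    rcases eq_or_lt_of_le ha.2 with h | h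
    · exact le_of_eq (by rw [← h])
    · exact (hanti x hx a ha.1 h).le
  · intro a ha b hb hab
    simp only [Finset.mem_filter] at ha hb
    by_contra hne
    rcases lt_or_gt_of_ne hne with h | h
    · exact absurd hab (ne_of_gt (hanti a ha.1 b hb.1 h))
    · exact absurd hab (ne_of_lt (hanti b hb.1 a ha.1 h))
  · intro b hb
    simp only [Finset.mem_filter] at hb
    have : b ∈ S.image f := (image_eq_of_anti S T f hcard hmem hanti).symm ▸ hb.1
    obtain ⟨a, ha, rfl⟩ := Finset.mem_image.mp this
    refine ⟨a, Finset.mem_filter.mpr ⟨ha, ?_⟩, rfl⟩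
    by_contra hax
    have hlt : a < x := lt_of_not_ge hax
    exact absurd hb.2 (not_le.mpr (hanti a ha x hx hlt))

lemma rank_inj {T : Finset (Fin n)} {y1 y2 : Fin n} (h1 : y1 ∈ T) (h2 : y2 ∈ T)
    (h : (T.filter (· ≤ y1)).card = (T.filter (· ≤ y2)).card) : y1 = y2 := by
  by_contra hne
  rcases lt_or_gt_of_ne hne with hlt | hlt
  all_goals {
    first
    | (have hss : T.filter (· ≤ y1) ⊂ T.filter (· ≤ y2) := by
        constructor
        · intro x hx
          simp only [Finset.mem_filter] at hx ⊢
          exact ⟨hx.1, hx.2.trans hlt.le⟩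
        · intro hsub
          have := hsub (Finset.mem_filter.mpr ⟨h2, le_refl _⟩)
          simp only [Finset.mem_filter] at this
          exact absurd this.2 (not_le.mpr hlt)
       exact absurd h (ne_of_lt (Finset.card_lt_card hss)))
    | (have hss : T.filter (· ≤ y2) ⊂ T.filter (· ≤ y1) := by
        constructor
        · intro x hx
          simp only [Finset.mem_filter] at hx ⊢
          exact ⟨hx.1, hx.2.trans hlt.le⟩
        · intro hsub
          have := hsub (Finset.mem_filter.mpr ⟨h1, le_refl _⟩)
          simp only [Finset.mem_filter] at this
          exact absurd this.2 (not_le.mpr hlt)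
       exact absurd h (ne_of_gt (Finset.card_lt_card hss)))
  }

lemma agree_on {S T : Finset (Fin n)} {f g : Fin n → Fin n} (hcard : S.card = T.card)
    (hfm : ∀ x ∈ S, f x ∈ T) (hfa : ∀ x ∈ S, ∀ y ∈ S, x < y → f y < f x)
    (hgm : ∀ x ∈ S, g x ∈ T) (hga : ∀ x ∈ S, ∀ y ∈ S, x < y → g y < g x)
    {x : Fin n} (hx : x ∈ S) : f x = g x := by
  apply rank_inj (hfm x hx) (hgm x hx)
  rw [rank_transport' S T f hcard hfm hfa hx, rank_transport' S T g hcard hgm hga hx]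

end rank
end perm

section mk
variable {n : ℕ}

def mkPerm (P V : Finset (Fin n)) (h : P.card = V.card) : Equiv.Perm (Fin n) :=
  (Equiv.sumCompl (· ∈ P)).symm.trans
    ((Equiv.sumCongr
        (((P.orderIsoOfFin rfl).toEquiv.symm.trans Fin.revPerm).trans
          (V.orderIsoOfFin h.symm).toEquiv)
        (((((Equiv.subtypeEquivRight (fun x => (Finset.mem_compl (s := P) (a := x)).symm)).trans
            (Pᶜ.orderIsoOfFin rfl).toEquiv.symm).trans Fin.revPerm).trans
          (Vᶜ.orderIsoOfFin (by
            simp only [Finset.card_compl, Fintype.card_fin, h])).toEquiv).trans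
          (Equiv.subtypeEquivRight (fun x => Finset.mem_compl (s := V) (a := x))))).trans
      (Equiv.sumCompl (· ∈ V)))

variable {P V : Finset (Fin n)} (h : P.card = V.card)

lemma mkPerm_apply_mem {i : Fin n} (hi : i ∈ P) :
    mkPerm P V h i = ((V.orderIsoOfFin h.symm)
      (Fin.rev ((P.orderIsoOfFin rfl).symm ⟨i, hi⟩)) : Fin n) := by
  simp [mkPerm, Equiv.sumCompl_symm_apply_of_pos hi]

lemma mkPerm_apply_not_mem {i : Fin n} (hi : i ∉ P) :
    mkPerm P V h i = ((Vᶜ.orderIsoOfFin (by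
        simp only [Finset.card_compl, Fintype.card_fin, h]))
      (Fin.rev ((Pᶜ.orderIsoOfFin rfl).symm ⟨i, Finset.mem_compl.mpr hi⟩)) : Fin n) := by
  simp [mkPerm, Equiv.sumCompl_symm_apply_of_neg hi]
  rfl

lemma mkPerm_mem {i : Fin n} (hi : i ∈ P) : mkPerm P V h i ∈ V := by
  rw [mkPerm_apply_mem h hi]
  exact Finset.coe_mem _

lemma mkPerm_not_mem {i : Fin n} (hi : i ∉ P) : mkPerm P V h i ∉ V := by
  rw [mkPerm_apply_not_mem h hi]
  exact Finset.mem_compl.mp (Finset.coe_mem _)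

lemma mkPerm_anti_mem {i j : Fin n} (hi : i ∈ P) (hj : j ∈ P) (hij : i < j) :
    mkPerm P V h j < mkPerm P V h i := by
  rw [mkPerm_apply_mem h hi, mkPerm_apply_mem h hj]
  apply Subtype.coe_lt_coe.mpr
  apply (OrderIso.lt_iff_lt _).mpr
  rw [Fin.rev_lt_rev]
  apply (OrderIso.lt_iff_lt _).mpr
  exact Subtype.mk_lt_mk.mpr hij

lemma mkPerm_anti_not_mem {i j : Fin n} (hi : i ∉ P) (hj : j ∉ P) (hij : i < j) :
    mkPerm P V h j < mkPerm P V h i := by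
  rw [mkPerm_apply_not_mem h hi, mkPerm_apply_not_mem h hj]
  apply Subtype.coe_lt_coe.mpr
  apply (OrderIso.lt_iff_lt _).mpr
  rw [Fin.rev_lt_rev]
  apply (OrderIso.lt_iff_lt _).mpr
  exact Subtype.mk_lt_mk.mpr hij

end mk

section counting
variable {n : ℕ}

lemma compl_filter_le_split (P : Finset (Fin n)) (j : Fin n) :
    (Pᶜ.filter (· ≤ j)).card + (P.filter (· ≤ j)).card = (j : ℕ) + 1 := by
  have h1 := Finset.card_filter_add_card_filter_not
    (s := Finset.Iic j) (p := (· ∈ P))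
  have e1 : (Finset.Iic j).filter (· ∈ P) = P.filter (· ≤ j) := by
    ext x; simp [Finset.mem_Iic, and_comm]
  have e2 : (Finset.Iic j).filter (fun x => ¬ x ∈ P) = Pᶜ.filter (· ≤ j) := by
    ext x; simp [Finset.mem_Iic, Finset.mem_compl, and_comm]
  rw [e1, e2, Fin.card_Iic] at h1
  omega

lemma compl_filter_ge_split (V : Finset (Fin n)) (x : Fin n) :
    (Vᶜ.filter (x ≤ ·)).card + (V.filter (x ≤ ·)).card = n - (x : ℕ) := by
  have h1 := Finset.card_filter_add_card_filter_not
    (s := Finset.Ici x) (p := (· ∈ V))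
  have e1 : (Finset.Ici x).filter (· ∈ V) = V.filter (x ≤ ·) := by
    ext y; simp [Finset.mem_Ici, and_comm]
  have e2 : (Finset.Ici x).filter (fun y => ¬ y ∈ V) = Vᶜ.filter (x ≤ ·) := by
    ext y; simp [Finset.mem_Ici, Finset.mem_compl, and_comm]
  rw [e1, e2, Fin.card_Ici] at h1
  omega

lemma not_isMinAt_of_rev_lt {σ : Equiv.Perm (Fin n)} {q : Fin n}
    (hpt : Fin.rev q < σ q) : ¬ IsMinAt σ q := by
  intro hmin
  have hsub : (Finset.Iic q).image σ ⊆ Finset.Ici (σ q) := by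
    intro y hy
    obtain ⟨x, hx, rfl⟩ := Finset.mem_image.mp hy
    rw [Finset.mem_Iic] at hx
    rw [Finset.mem_Ici]
    rcases eq_or_lt_of_le hx with rfl | hlt
    · exact le_refl _
    · exact (hmin x hlt).le
  have hc := (Finset.card_le_card hsub)
  rw [Finset.card_image_of_injective _ σ.injective, Fin.card_Iic, Fin.card_Ici] at hc
  rw [Fin.lt_def, Fin.val_rev] at hpt
  have := q.isLt
  have := (σ q).isLt
  omega

lemma rev_lt_of_not_isMinAt {σ : Equiv.Perm (Fin n)} (hav : ¬ HasAscSeq (⇑σ) 3) {q : Fin n}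
    (hq : ¬ IsMinAt σ q) : Fin.rev q < σ q := by
  obtain ⟨j0, hj0, hj0v⟩ := not_min_elim hq
  have hsub : (insert j0 (Finset.Ioi q)).image σ ⊆ Finset.Iio (σ q) := by
    intro y hy
    obtain ⟨x, hx, rfl⟩ := Finset.mem_image.mp hy
    rw [Finset.mem_insert] at hx
    rw [Finset.mem_Iio]
    rcases hx with rfl | hx
    · exact hj0v
    · exact avoid_nonmin hav (Finset.mem_Ioi.mp hx) hq
  have hc := Finset.card_le_card hsub
  rw [Finset.card_image_of_injective _ σ.injective,
    Finset.card_insert_of_notMem (by simp [Finset.mem_Ioi]; exact hj0.le),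
    Fin.card_Ioi, Fin.card_Iio] at hc
  rw [Fin.lt_def, Fin.val_rev]
  have := q.isLt
  omega

lemma sigma_not_mem_minVal {σ : Equiv.Perm (Fin n)} {x : Fin n} (hx : x ∉ minPos σ) :
    σ x ∉ minVal σ := by
  intro hmem
  obtain ⟨y, hy, heq⟩ := Finset.mem_image.mp hmem
  exact hx (σ.injective heq ▸ hy)

lemma count_compl_transport (P V : Finset (Fin n)) (hc : P.card = V.card)
    (f : Fin n → Fin n) (hmem : ∀ x, x ∉ P → f x ∉ V)
    (hanti : ∀ x, x ∉ P → ∀ y, y ∉ P → x < y → f y < f x) {q : Fin n} (hq : q ∉ P) :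
    (Vᶜ.filter (f q ≤ ·)).card = (Pᶜ.filter (· ≤ q)).card := by
  apply rank_transport Pᶜ Vᶜ f
  · simp [Finset.card_compl, hc]
  · intro x hx
    exact Finset.mem_compl.mpr (hmem x (Finset.mem_compl.mp hx))
  · intro x hx y hy hxy
    exact hanti x (Finset.mem_compl.mp hx) y (Finset.mem_compl.mp hy) hxy
  · exact Finset.mem_compl.mpr hq

lemma pointwise_iff (V : Finset (Fin n)) {v r : Fin n} (hv : v ∉ V) :
    (Vᶜ.filter (v ≤ ·)).card ≤ (Vᶜ.filter (r < ·)).card ↔ r < v := by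
  constructor
  · intro hle
    by_contra hnot
    have hvr : v ≤ r := not_lt.mp hnot
    have hsub : Vᶜ.filter (r < ·) ⊆ (Vᶜ.filter (v ≤ ·)).erase v := by
      intro x hx
      simp only [Finset.mem_filter] at hx
      apply Finset.mem_erase.mpr
      refine ⟨?_, Finset.mem_filter.mpr ⟨hx.1, (hvr.trans hx.2.le)⟩⟩
      intro heq
      exact absurd hx.2 (not_lt.mpr (heq ▸ hvr))
    have h1 := Finset.card_le_card hsub
    have h2 : v ∈ Vᶜ.filter (v ≤ ·) :=
      Finset.mem_filter.mpr ⟨Finset.mem_compl.mpr hv, le_refl _⟩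
    rw [Finset.card_erase_of_mem h2] at h1
    have h3 := Finset.card_pos.mpr ⟨v, h2⟩
    omega
  · intro hrv
    apply Finset.card_le_card
    intro x hx
    simp only [Finset.mem_filter] at hx ⊢
    exact ⟨hx.1, hrv.trans_le hx.2⟩

end counting

section bridge
variable {n : ℕ}

def finsToNat (S : Finset (Fin n)) : Finset ℕ := S.map ⟨Fin.val, Fin.val_injective⟩

def finsToNatRev (S : Finset (Fin n)) : Finset ℕ :=
  S.map ⟨fun u => ((Fin.rev u : Fin n) : ℕ), by
    intro a b hab
    exact Fin.rev_injective (Fin.val_injective hab)⟩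

lemma mem_finsToNat {S : Finset (Fin n)} {t : ℕ} :
    t ∈ finsToNat S ↔ ∃ u ∈ S, (u : ℕ) = t := by simp [finsToNat]

lemma finsToNat_subset_range (S : Finset (Fin n)) : finsToNat S ⊆ Finset.range n := by
  intro t ht
  obtain ⟨u, _, rfl⟩ := mem_finsToNat.mp ht
  exact Finset.mem_range.mpr u.isLt

lemma finsToNatRev_subset_range (S : Finset (Fin n)) : finsToNatRev S ⊆ Finset.range n := by
  intro t ht
  simp only [finsToNatRev, Finset.mem_map, Function.Embedding.coeFn_mk] at ht
  obtain ⟨u, _, rfl⟩ := ht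
  exact Finset.mem_range.mpr (Fin.rev u).isLt

lemma card_finsToNat (S : Finset (Fin n)) : (finsToNat S).card = S.card := Finset.card_map _

lemma card_finsToNatRev (S : Finset (Fin n)) : (finsToNatRev S).card = S.card :=
  Finset.card_map _

lemma finsToNat_filter_le (S : Finset (Fin n)) (q : Fin n) :
    ((finsToNat S).filter (· ≤ (q : ℕ))).card = (S.filter (· ≤ q)).card := by
  rw [show (finsToNat S).filter (· ≤ (q : ℕ)) = finsToNat (S.filter (· ≤ q)) by
    ext t
    simp only [finsToNat, Finset.mem_filter, Finset.mem_map, Function.Embedding.coeFn_mk]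
    constructor
    · rintro ⟨⟨u, hu, rfl⟩, hle⟩
      exact ⟨u, ⟨hu, Fin.le_def.mpr hle⟩, rfl⟩
    · rintro ⟨u, ⟨hu, hle⟩, rfl⟩
      exact ⟨⟨u, hu, rfl⟩, Fin.le_def.mp hle⟩]
  exact card_finsToNat _

lemma finsToNatRev_filter_lt (S : Finset (Fin n)) (q : Fin n) :
    ((finsToNatRev S).filter (· < (q : ℕ))).card = (S.filter (Fin.rev q < ·)).card := by
  rw [show (finsToNatRev S).filter (· < (q : ℕ)) = finsToNatRev (S.filter (Fin.rev q < ·)) by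
    ext t
    simp only [finsToNatRev, Finset.mem_filter, Finset.mem_map, Function.Embedding.coeFn_mk]
    constructor
    · rintro ⟨⟨u, hu, rfl⟩, hlt⟩
      refine ⟨u, ⟨hu, ?_⟩, rfl⟩
      exact Fin.rev_lt_iff.mp (Fin.lt_def.mpr hlt)
    · rintro ⟨u, ⟨hu, hlt⟩, rfl⟩
      exact ⟨⟨u, hu, rfl⟩, Fin.lt_def.mp (Fin.rev_lt_iff.mpr hlt)⟩]
  exact card_finsToNatRev _

lemma card_minVal (σ : Equiv.Perm (Fin n)) : (minVal σ).card = (minPos σ).card :=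
  Finset.card_image_of_injective _ σ.injective

/-- Forward direction: an avoiding permutation gives a dominated pair. -/
lemma avoider_isDomPair (σ : Equiv.Perm (Fin n)) (hav : ¬ HasAscSeq (⇑σ) 3) :
    IsDomPair n (finsToNat (minPos σ)ᶜ) (finsToNatRev (minVal σ)ᶜ) := by
  refine ⟨finsToNat_subset_range _, finsToNatRev_subset_range _, ?_, ?_⟩
  · rw [card_finsToNat, card_finsToNatRev, Finset.card_compl, Finset.card_compl, card_minVal]
  · intro q' hq'
    obtain ⟨q, hq, rfl⟩ := mem_finsToNat.mp hq'
    rw [Finset.mem_compl] at hq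
    rw [finsToNat_filter_le, finsToNatRev_filter_lt]
    rw [← count_compl_transport (minPos σ) (minVal σ) (card_minVal σ).symm σ
      (fun x hx => sigma_not_mem_minVal hx)
      (fun x hx y _ hxy => avoid_nonmin hav hxy (by simpa [minPos] using hx)) hq]
    exact (pointwise_iff (minVal σ) (sigma_not_mem_minVal hq)).mpr
      (rev_lt_of_not_isMinAt hav (by simpa [minPos] using hq))

variable {P V : Finset (Fin n)} (hc : P.card = V.card)

lemma mkPerm_rev_lt
    (hdom : ∀ q' ∈ finsToNat Pᶜ, ((finsToNat Pᶜ).filter (· ≤ q')).card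
      ≤ ((finsToNatRev Vᶜ).filter (· < q')).card)
    {q : Fin n} (hq : q ∉ P) : Fin.rev q < mkPerm P V hc q := by
  have h1 := hdom (q : ℕ) (mem_finsToNat.mpr ⟨q, Finset.mem_compl.mpr hq, rfl⟩)
  rw [finsToNat_filter_le, finsToNatRev_filter_lt] at h1
  rw [← count_compl_transport P V hc (mkPerm P V hc)
    (fun x hx => mkPerm_not_mem hc hx)
    (fun x hx y hy hxy => mkPerm_anti_not_mem hc hx hy hxy) hq] at h1
  exact (pointwise_iff V (mkPerm_not_mem hc hq)).mp h1

lemma isMinAt_mkPerm (hpt : ∀ q, q ∉ P → Fin.rev q < mkPerm P V hc q)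
    {p : Fin n} (hp : p ∈ P) : IsMinAt (mkPerm P V hc) p := by
  set σ := mkPerm P V hc with hσ
  intro j hj
  by_cases hjP : j ∈ P
  · exact mkPerm_anti_mem hc hjP hp hj
  · -- j is a non-minimum position before p
    by_contra hnot
    have hne : σ j ≠ σ p := fun heq => hjP (σ.injective heq ▸ hp)
    have hlt : σ j < σ p := lt_of_le_of_ne (not_lt.mp hnot) hne
    -- counting contradiction
    have h1 : (Vᶜ.filter (σ j ≤ ·)).card = (Pᶜ.filter (· ≤ j)).card :=
      count_compl_transport P V hc σ (fun x hx => mkPerm_not_mem hc hx)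
        (fun x hx y hy hxy => mkPerm_anti_not_mem hc hx hy hxy) hjP
    have h2 := compl_filter_le_split P j
    have h3 := compl_filter_ge_split V (σ j)
    have h4 : (P.filter (· ≤ j)).card + 1 ≤ (V.filter (σ j ≤ ·)).card := by
      have hsub : (insert p (P.filter (· ≤ j))).image σ ⊆ V.filter (σ j ≤ ·) := by
        intro y hy
        obtain ⟨x, hx, rfl⟩ := Finset.mem_image.mp hy
        rw [Finset.mem_insert] at hx
        rcases hx with rfl | hx
        · exact Finset.mem_filter.mpr ⟨mkPerm_mem hc hp, hlt.le⟩
        · obtain ⟨hxP, hxj⟩ := Finset.mem_filter.mp hx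
          have hxp : x < p := lt_of_le_of_lt hxj hj
          have : σ p < σ x := mkPerm_anti_mem hc hxP hp hxp
          exact Finset.mem_filter.mpr ⟨mkPerm_mem hc hxP, (hlt.trans this).le⟩
      have hcle := Finset.card_le_card hsub
      rw [Finset.card_image_of_injective _ σ.injective,
        Finset.card_insert_of_notMem (by
          simp only [Finset.mem_filter, not_and]
          intro _; exact not_le.mpr hj)] at hcle
      omega
    have h5 := hpt j hjP
    rw [Fin.lt_def, Fin.val_rev] at h5
    have hj1 := j.isLt
    have hj2 := (σ j).isLt
    omega

lemma minPos_mkPerm (hpt : ∀ q, q ∉ P → Fin.rev q < mkPerm P V hc q) :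
    minPos (mkPerm P V hc) = P := by
  ext i
  simp only [minPos, Finset.mem_filter, Finset.mem_univ, true_and]
  constructor
  · intro hmin
    by_contra hiP
    exact absurd hmin (not_isMinAt_of_rev_lt (hpt i hiP))
  · intro hiP
    exact isMinAt_mkPerm hc hpt hiP

lemma minVal_mkPerm (hpt : ∀ q, q ∉ P → Fin.rev q < mkPerm P V hc q) :
    minVal (mkPerm P V hc) = V := by
  rw [minVal, minPos_mkPerm hc hpt]
  exact image_eq_of_anti P V _ hc (fun x hx => mkPerm_mem hc hx)
    (fun x hx y hy hxy => mkPerm_anti_mem hc hx hy hxy)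

lemma mkPerm_avoid : ¬ HasAscSeq (⇑(mkPerm P V hc)) 3 :=
  avoid_of_two_classes _ P
    (fun i hi j hj hij => mkPerm_anti_mem hc hi hj hij)
    (fun i hi j hj hij => mkPerm_anti_not_mem hc hi hj hij)

end bridge

section assemble
variable {n : ℕ}

lemma mem_minPos {σ : Equiv.Perm (Fin n)} {x : Fin n} : x ∈ minPos σ ↔ IsMinAt σ x := by
  simp [minPos]

def revEmb : Fin n ↪ Fin n := ⟨Fin.rev, Fin.rev_injective⟩

lemma map_revEmb_map_revEmb (S : Finset (Fin n)) : (S.map revEmb).map revEmb = S := by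
  rw [Finset.map_map]
  have : (revEmb (n := n)).trans revEmb = Function.Embedding.refl _ := by
    ext x; simp [revEmb, Fin.rev_rev]
  rw [this, Finset.map_refl]

lemma finsToNat_attachFin (A : Finset ℕ) (h : ∀ m ∈ A, m < n) :
    finsToNat (A.attachFin h) = A := by
  ext t
  rw [mem_finsToNat]
  constructor
  · rintro ⟨u, hu, rfl⟩
    exact (Finset.mem_attachFin h).mp hu
  · intro ht
    exact ⟨⟨t, h t ht⟩, (Finset.mem_attachFin h).mpr ht, rfl⟩

lemma attachFin_finsToNat (S : Finset (Fin n))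
    (h : ∀ m ∈ finsToNat S, m < n) : (finsToNat S).attachFin h = S := by
  ext u
  rw [Finset.mem_attachFin, mem_finsToNat]
  constructor
  · rintro ⟨w, hw, hww⟩
    rwa [Fin.val_injective hww.symm]
  · intro hu
    exact ⟨u, hu, rfl⟩

lemma finsToNatRev_map_revEmb (S : Finset (Fin n)) :
    finsToNatRev (S.map revEmb) = finsToNat S := by
  ext t
  rw [mem_finsToNat]
  simp only [finsToNatRev, Finset.mem_map, Function.Embedding.coeFn_mk, revEmb]
  constructor
  · rintro ⟨u, ⟨w, hw, rfl⟩, rfl⟩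
    exact ⟨w, hw, by show (w : ℕ) = ((Fin.rev (Fin.rev w) : Fin n) : ℕ); rw [Fin.rev_rev]⟩
  · rintro ⟨w, hw, rfl⟩
    exact ⟨Fin.rev w, ⟨w, hw, rfl⟩, by show ((Fin.rev (Fin.rev w) : Fin n) : ℕ) = w; rw [Fin.rev_rev]⟩

lemma attachFin_finsToNatRev (S : Finset (Fin n))
    (h : ∀ m ∈ finsToNatRev S, m < n) : (finsToNatRev S).attachFin h = S.map revEmb := by
  ext u
  rw [Finset.mem_attachFin]
  simp only [finsToNatRev, revEmb, Finset.mem_map, Function.Embedding.coeFn_mk]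
  constructor
  · rintro ⟨w, hw, hww⟩
    exact ⟨w, hw, Fin.val_injective hww⟩
  · rintro ⟨w, hw, rfl⟩
    exact ⟨w, hw, rfl⟩

def permOfPair (A B : Finset ℕ) (hd : IsDomPair n A B) : Equiv.Perm (Fin n) :=
  mkPerm (A.attachFin (fun m hm => Finset.mem_range.mp (hd.1 hm)))ᶜ
    ((B.attachFin (fun m hm => Finset.mem_range.mp (hd.2.1 hm))).map revEmb)ᶜ
    (by simp only [Finset.card_compl, Finset.card_map, Finset.card_attachFin, hd.2.2.1])

lemma permOfPair_pt (A B : Finset ℕ) (hd : IsDomPair n A B) :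
    ∀ q, q ∉ (A.attachFin (fun m hm => Finset.mem_range.mp (hd.1 hm)))ᶜ →
      Fin.rev q < permOfPair A B hd q := by
  intro q hq
  refine mkPerm_rev_lt _ ?_ hq
  rw [compl_compl, compl_compl, finsToNat_attachFin, finsToNatRev_map_revEmb,
    finsToNat_attachFin]
  exact hd.2.2.2

lemma minPos_permOfPair (A B : Finset ℕ) (hd : IsDomPair n A B) :
    minPos (permOfPair A B hd)
      = (A.attachFin (fun m hm => Finset.mem_range.mp (hd.1 hm)))ᶜ :=
  minPos_mkPerm _ (permOfPair_pt A B hd)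

lemma minVal_permOfPair (A B : Finset ℕ) (hd : IsDomPair n A B) :
    minVal (permOfPair A B hd)
      = ((B.attachFin (fun m hm => Finset.mem_range.mp (hd.2.1 hm))).map revEmb)ᶜ :=
  minVal_mkPerm _ (permOfPair_pt A B hd)

lemma mkPerm_congr {P P' V V' : Finset (Fin n)} (hP : P = P') (hV : V = V')
    (h : P.card = V.card) (h' : P'.card = V'.card) : mkPerm P V h = mkPerm P' V' h' := by
  subst hP; subst hV; rfl

lemma mkPerm_eq_self (σ : Equiv.Perm (Fin n)) (hav : ¬ HasAscSeq (⇑σ) 3) :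
    mkPerm (minPos σ) (minVal σ) (card_minVal σ).symm = σ := by
  apply Equiv.ext
  intro x
  by_cases hx : x ∈ minPos σ
  · exact agree_on (card_minVal σ).symm
      (fun y hy => mkPerm_mem _ hy)
      (fun y hy z hz hyz => mkPerm_anti_mem _ hy hz hyz)
      (fun y hy => Finset.mem_image_of_mem σ hy)
      (fun y hy z hz hyz => (mem_minPos.mp hz) y hyz) hx
  · refine agree_on (S := (minPos σ)ᶜ) (T := (minVal σ)ᶜ)
      (by simp [Finset.card_compl, card_minVal])
      (fun y hy => Finset.mem_compl.mpr (mkPerm_not_mem _ (Finset.mem_compl.mp hy)))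
      (fun y hy z hz hyz => mkPerm_anti_not_mem _
        (Finset.mem_compl.mp hy) (Finset.mem_compl.mp hz) hyz)
      (fun y hy => Finset.mem_compl.mpr (sigma_not_mem_minVal (Finset.mem_compl.mp hy)))
      (fun y hy z hz hyz => avoid_nonmin hav hyz
        (by simpa [mem_minPos] using Finset.mem_compl.mp hy))
      (Finset.mem_compl.mpr hx)

def avoidersEquivDomPairs (n : ℕ) :
    {σ : Equiv.Perm (Fin n) // ¬ HasAscSeq (⇑σ) 3} ≃ DomPairs n where
  toFun x := ⟨(finsToNat (minPos x.1)ᶜ, finsToNatRev (minVal x.1)ᶜ),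
    avoider_isDomPair x.1 x.2⟩
  invFun y := ⟨permOfPair y.1.1 y.1.2 y.2, mkPerm_avoid _⟩
  left_inv x := by
    obtain ⟨σ, hav⟩ := x
    apply Subtype.ext
    dsimp only
    show permOfPair _ _ _ = σ
    rw [permOfPair]
    refine Eq.trans (mkPerm_congr ?_ ?_ _ (card_minVal σ).symm) (mkPerm_eq_self σ hav)
    · rw [attachFin_finsToNat, compl_compl]
    · rw [attachFin_finsToNatRev, map_revEmb_map_revEmb, compl_compl]
  right_inv y := by
    obtain ⟨⟨A, B⟩, hd⟩ := y
    apply Subtype.ext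
    dsimp only
    rw [Prod.mk.injEq]
    constructor
    · rw [minPos_permOfPair, compl_compl, finsToNat_attachFin]
    · rw [minVal_permOfPair, compl_compl, finsToNatRev_map_revEmb, finsToNat_attachFin]

end assemble

lemma permCount_two_eq_catalan' (n : ℕ) : permCount 2 n = catalan n := by
  rw [permCount]
  have e : {τ : Equiv.Perm (Fin n) // ¬ HasAscSeq (⇑τ) (2+1)} ≃
      {p : DyckWord // p.semilength = n} :=
    (avoidersEquivDomPairs n).trans (domPairsEquivDyck n)
  rw [Nat.card_congr e, Nat.card_eq_fintype_card,
    DyckWord.card_dyckWord_semilength_eq_catalan]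

/-- The number of permutations of `{1,…,n}` with no ascending subsequence of
length `3` is the `n`-th Catalan number `C(2n,n)/(n+1)`. -/
theorem permCount_two_eq_catalan (n : ℕ) :
    (permCount 2 n : ℚ) = (Nat.choose (2 * n) n : ℚ) / ((n : ℚ) + 1) := by
  rw [permCount_two_eq_catalan']
  have h2 := succ_mul_catalan_eq_centralBinom n
  rw [Nat.centralBinom] at h2
  rw [eq_div_iff (by positivity : ((n : ℚ) + 1) ≠ 0)]
  rw [mul_comm]
  exact_mod_cast congrArg (Nat.cast : ℕ → ℚ) h2
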